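/- Define polynomials P_t: ℝ → ℝ for a mean-zero real random variable Z with finite moments m_s = E[Z^s] by P_0(x) = 1 and P_t(x) = x^t − ∑_{s=1}^{t} C(t, s)·m_s·P_{t−s}(x). Then for every real μ and every t ≥ 0, E[P_t(μ + Z)] = μ^t. -/

import Mathlib

open MeasureTheory

/-- The adjusted polynomials of a sequence of moments `m`:
`P_0(x) = 1` and `P_t(x) = x^t - ∑_{s=1}^t C(t,s) m_s P_{t-s}(x)`. -/
noncomputable def adjP (m : ℕ → ℝ) : ℕ → ℝ → ℝ
  | 0 => fun _ => 1
  | t + 1 => fun x =>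
      x ^ (t + 1) -
        ∑ s ∈ Finset.range (t + 1),
          ((t + 1).choose (s + 1) : ℝ) * m (s + 1) * adjP m (t - s) x
  decreasing_by exact Nat.lt_succ_of_le (Nat.sub_le t s)

lemma pow_add_expand (μ : ℝ) (n : ℕ) :
    (fun z : ℝ => (μ + z) ^ n) =
      fun z => ∑ k ∈ Finset.range (n+1), μ ^ k * z ^ (n - k) * (n.choose k : ℝ) := by
  funext z; rw [add_pow]

lemma integrable_mu_add_pow (D : Measure ℝ)
    (hint : ∀ s : ℕ, Integrable (fun z => z ^ s) D) (μ : ℝ) (n : ℕ) :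
    Integrable (fun z => (μ + z) ^ n) D := by
  rw [pow_add_expand]
  apply integrable_finset_sum
  intro k _
  exact ((hint (n-k)).const_mul (μ^k)).mul_const _

lemma integral_mu_add_pow (D : Measure ℝ)
    (hint : ∀ s : ℕ, Integrable (fun z => z ^ s) D) (μ : ℝ) (n : ℕ) :
    ∫ z, (μ + z) ^ n ∂D =
      ∑ k ∈ Finset.range (n+1), μ ^ k * (n.choose k : ℝ) * ∫ z, z ^ (n-k) ∂D := by
  rw [show (fun z : ℝ => (μ + z) ^ n) =
      fun z => ∑ k ∈ Finset.range (n+1), μ ^ k * z ^ (n - k) * (n.choose k : ℝ) from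
      pow_add_expand μ n]
  rw [integral_finset_sum _ (fun k _ => ((hint (n-k)).const_mul (μ^k)).mul_const _)]
  refine Finset.sum_congr rfl fun k _ => ?_
  rw [integral_mul_const, integral_const_mul]
  ring

theorem adjP_integrable_and_integral (D : Measure ℝ) [IsProbabilityMeasure D]
    (hint : ∀ s : ℕ, Integrable (fun z => z ^ s) D) (μ : ℝ) (t : ℕ) :
    Integrable (fun z => adjP (fun s => ∫ z, z ^ s ∂D) t (μ + z)) D ∧
      ∫ z, adjP (fun s => ∫ z, z ^ s ∂D) t (μ + z) ∂D = μ ^ t := by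
  set m : ℕ → ℝ := fun s => ∫ z, z ^ s ∂D with hm
  induction t using Nat.strong_induction_on with
  | _ t ih =>
    match t with
    | 0 => simp [adjP]
    | t+1 =>
      have hunfold : (fun z => adjP m (t+1) (μ + z)) =
          fun z => (μ + z) ^ (t + 1) -
            ∑ s ∈ Finset.range (t + 1),
              ((t + 1).choose (s + 1) : ℝ) * m (s + 1) * adjP m (t - s) (μ + z) := by
        funext z; rw [adjP]
      have hih : ∀ s ∈ Finset.range (t+1),
          Integrable (fun z => ((t + 1).choose (s + 1) : ℝ) * m (s + 1) * adjP m (t - s) (μ + z)) D :=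
        fun s _ => ((ih (t-s) (Nat.lt_succ_of_le (Nat.sub_le t s))).1).const_mul _
      have hint1 : Integrable (fun z =>
          ∑ s ∈ Finset.range (t + 1),
            ((t + 1).choose (s + 1) : ℝ) * m (s + 1) * adjP m (t - s) (μ + z)) D :=
        integrable_finset_sum _ hih
      constructor
      · rw [hunfold]
        exact (integrable_mu_add_pow D hint μ (t+1)).sub hint1
      · rw [hunfold]
        rw [integral_sub (integrable_mu_add_pow D hint μ (t+1)) hint1,
          integral_finset_sum _ hih, integral_mu_add_pow D hint μ (t+1)]
        have hval : ∀ s ∈ Finset.range (t+1),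
            ∫ z, ((t + 1).choose (s + 1) : ℝ) * m (s + 1) * adjP m (t - s) (μ + z) ∂D
              = ((t + 1).choose (s + 1) : ℝ) * m (s + 1) * μ ^ (t - s) := by
          intro s hs
          rw [integral_const_mul, (ih (t-s) (Nat.lt_succ_of_le (Nat.sub_le t s))).2]
        rw [Finset.sum_congr rfl hval]
        rw [Finset.sum_range_succ]
        have hm0 : m 0 = 1 := by simp [hm]
        have hrefl : ∑ k ∈ Finset.range (t+1), μ ^ k * ((t+1).choose k : ℝ) * m (t+1-k)
            = ∑ s ∈ Finset.range (t+1), ((t + 1).choose (s + 1) : ℝ) * m (s + 1) * μ ^ (t - s) := by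
          rw [← Finset.sum_range_reflect]
          refine Finset.sum_congr rfl fun s hs => ?_
          rw [Finset.mem_range] at hs
          have h2 : t + 1 - (t - s) = s + 1 := by omega
          have h3 : t + 1 - 1 - s = t - s := by omega
          have h4 : (t+1).choose (t-s) = (t+1).choose (s+1) := by
            rw [show t - s = (t+1) - (s+1) by omega]
            exact Nat.choose_symm (by omega)
          rw [h3, h2, h4]; ring
        rw [hrefl]
        simp [hm0]

/-- For a mean-zero real random variable `Z` with finite moments `m_s = E[Z^s]`,
the adjusted polynomials satisfy `E[P_t(μ + Z)] = μ^t` for every real `μ` and every `t`. -/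
theorem stmt11 (D : Measure ℝ) [IsProbabilityMeasure D]
    (hint : ∀ s : ℕ, Integrable (fun z => z ^ s) D)
    (hmean : ∫ z, z ∂D = 0)
    (μ : ℝ) (t : ℕ) :
    ∫ z, adjP (fun s => ∫ z, z ^ s ∂D) t (μ + z) ∂D = μ ^ t :=
  (adjP_integrable_and_integral D hint μ t).2
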